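/- Let g be a finite-dimensional Lie algebra over a field k of characteristic zero whose Killing form κ is nondegenerate, let μ ∈ k, and for a,b,c,d ∈ g set T(a,b,c,d) = Tr(ad a ∘ ad b ∘ ad c ∘ ad d). Suppose that for all a,b,c,d ∈ g, T(a,b,c,d) + T(a,c,d,b) + T(a,d,b,c) = μ·(κ(a,c)κ(b,d) + κ(a,b)κ(c,d) + κ(a,d)κ(b,c)). Then for all a,b,c,d ∈ g: (3/2)·(T(a,b,c,d) + T(b,a,c,d)) − μ·(κ(a,c)κ(b,d) + κ(a,b)κ(c,d) + κ(a,d)κ(b,c)) = −(1/2)·κ([a,d],[b,c]) − (1/4)·κ([a,b],[c,d]). -/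

import Mathlib

open LieAlgebra in
/-- The quartic adjoint trace `T(a,b,c,d) = Tr(ad a ∘ ad b ∘ ad c ∘ ad d)`. -/
noncomputable def adTrace4 (k : Type*) {L : Type*} [Field k]
    [LieRing L] [LieAlgebra k L] (a b c d : L) : k :=
  LinearMap.trace k L (ad k L a ∘ₗ ad k L b ∘ₗ ad k L c ∘ₗ ad k L d)


section Aux
variable {k L : Type*} [Field k] [LieRing L] [LieAlgebra k L] [Module.Finite k L]

open LieAlgebra LinearMap

set_option linter.unusedSectionVars false in
lemma adTrace4_cyc (a b c d : L) : adTrace4 k a b c d = adTrace4 k b c d a := by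
  unfold adTrace4
  rw [LinearMap.trace_comp_comm']
  simp [LinearMap.comp_assoc]

set_option linter.unusedSectionVars false in
lemma killingForm_lie_lie (a b c d : L) :
    killingForm k L ⁅a, b⁆ ⁅c, d⁆ =
      adTrace4 k a b c d - adTrace4 k a b d c - adTrace4 k b a c d + adTrace4 k b a d c := by
  have h : ∀ x y : L, ad k L ⁅x, y⁆ = ad k L x ∘ₗ ad k L y - ad k L y ∘ₗ ad k L x := by
    intro x y
    ext z; simp only [LinearMap.sub_apply, LinearMap.comp_apply, ad_apply, lie_lie]
  rw [killingForm_apply_apply, h, h]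
  unfold adTrace4
  simp only [LinearMap.comp_sub, LinearMap.sub_comp, map_sub, LinearMap.comp_assoc]
  ring

end Aux

/-- For a finite-dimensional Lie algebra over a field of characteristic zero with
nondegenerate Killing form `κ`, assuming the polarized quartic trace identity
`T(a,b,c,d) + T(a,c,d,b) + T(a,d,b,c) = μ·(κ(a,c)κ(b,d) + κ(a,b)κ(c,d) + κ(a,d)κ(b,c))`,
one has
`(3/2)·(T(a,b,c,d) + T(b,a,c,d)) − μ·(κ(a,c)κ(b,d) + κ(a,b)κ(c,d) + κ(a,d)κ(b,c))
  = −(1/2)·κ([a,d],[b,c]) − (1/4)·κ([a,b],[c,d])`. -/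
theorem adTrace4_GS_identity {k L : Type*} [Field k] [CharZero k]
    [LieRing L] [LieAlgebra k L] [Module.Finite k L]
    (hκ : (killingForm k L).Nondegenerate) (μ : k)
    (htrace : ∀ a b c d : L,
      adTrace4 k a b c d + adTrace4 k a c d b + adTrace4 k a d b c =
        μ * (killingForm k L a c * killingForm k L b d +
          killingForm k L a b * killingForm k L c d +
          killingForm k L a d * killingForm k L b c))
    (a b c d : L) :
    (3 / 2 : k) * (adTrace4 k a b c d + adTrace4 k b a c d) -
        μ * (killingForm k L a c * killingForm k L b d +
          killingForm k L a b * killingForm k L c d +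
          killingForm k L a d * killingForm k L b c) =
      -(1 / 2 : k) * killingForm k L ⁅a, d⁆ ⁅b, c⁆ -
        (1 / 4 : k) * killingForm k L ⁅a, b⁆ ⁅c, d⁆ := by
  have comm : ∀ x y : L, killingForm k L x y = killingForm k L y x :=
    fun x y => LieModule.traceForm_comm k L L x y
  have e1 := htrace a b c d
  have e2 := htrace a b d c
  have e3 := htrace b a c d
  rw [adTrace4_cyc b a c d, adTrace4_cyc b c d a, adTrace4_cyc c d a b, adTrace4_cyc d a b c,
    adTrace4_cyc b d a c, adTrace4_cyc d a c b, comm b a] at e3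
  rw [comm d c] at e2
  rw [killingForm_lie_lie a d b c, killingForm_lie_lie a b c d,
    adTrace4_cyc d a b c, adTrace4_cyc d a c b, adTrace4_cyc b a c d, adTrace4_cyc b a d c]
  linear_combination (1/2 : k) * e1 + (3/4 : k) * e3 - (1/4 : k) * e2
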